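/- (Bregman descent lemma / three-point property) Let h be a convex function of Legendre type, g differentiable, and suppose Lh − g is convex on a convex set C (L-smad). If x⁺ = argmin_{u∈C} { λ⟨∇g(x), u⟩ + D_h(u, x) } with 0 < λL < 1 and x in the interior of dom h, then λ g(x⁺) ≤ λ g(x) − (1 − λL) D_h(x⁺, x). -/

import Mathlib

open RealInnerProductSpace

lemma grad_ineq_aux {E : Type*} [NormedAddCommGroup E] [InnerProductSpace ℝ E]
    {C : Set E} {φ : E → ℝ} (hφ : Differentiable ℝ φ) (hc : ConvexOn ℝ C φ)
    {x y : E} (hx : x ∈ C) (hy : y ∈ C) :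
    φ x + fderiv ℝ φ x (y - x) ≤ φ y := by
  set A : ℝ →ᵃ[ℝ] E := AffineMap.lineMap x y with hA
  have hψ : ConvexOn ℝ (A ⁻¹' C) (φ ∘ A) := hc.comp_affineMap A
  have h0 : (0:ℝ) ∈ A ⁻¹' C := by simp [hA, hx]
  have h1 : (1:ℝ) ∈ A ⁻¹' C := by simp [hA, hy]
  have hAd : HasDerivAt A (y - x) 0 := by
    have : HasDerivAt (fun t : ℝ => t • (y - x) + x) ((1:ℝ) • (y - x)) 0 :=
      ((hasDerivAt_id (0:ℝ)).smul_const (y - x)).add_const x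
    have e : (A : ℝ → E) = fun t => t • (y - x) + x :=
      funext fun t => by simp [hA, AffineMap.lineMap_apply, vsub_eq_sub, vadd_eq_add]
    rw [e]
    simpa using this
  have hd : HasDerivAt (φ ∘ A) (fderiv ℝ φ x (y - x)) 0 := by
    have hx0 : A 0 = x := by simp [hA]
    have := ((hφ (A 0)).hasFDerivAt).comp_hasDerivAt 0 hAd
    rwa [hx0] at this
  have := hψ.le_slope_of_hasDerivAt h0 h1 one_pos hd
  have hs : slope (φ ∘ A) 0 1 = φ y - φ x := by
    simp [slope, hA, Function.comp]
  rw [hs] at this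
  linarith

/-- Bregman descent lemma: if `L·h - g` is convex on the convex set `C` (L-smad),
`h` convex differentiable, and `x⁺` minimizes `u ↦ λ⟨∇g(x), u⟩ + D_h(u, x)` over `C`
with `0 < λL < 1`, then `λ g(x⁺) ≤ λ g(x) - (1 - λL) D_h(x⁺, x)`. -/
theorem bregman_descent (n : ℕ) (C : Set (EuclideanSpace ℝ (Fin n))) (hC : Convex ℝ C)
    (h g : EuclideanSpace ℝ (Fin n) → ℝ)
    (hh : Differentiable ℝ h) (hg : Differentiable ℝ g)
    (hconv : ConvexOn ℝ C h)
    (L lam : ℝ) (hL : 0 < L) (hlam : 0 < lam) (hlamL : lam * L < 1)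
    (hsmad : ConvexOn ℝ C (fun u => L * h u - g u))
    (Dh : EuclideanSpace ℝ (Fin n) → EuclideanSpace ℝ (Fin n) → ℝ)
    (hDh : ∀ u v, Dh u v = h u - h v - ⟪gradient h v, u - v⟫)
    (x xp : EuclideanSpace ℝ (Fin n)) (hx : x ∈ C) (hxp : xp ∈ C)
    (hmin : ∀ u ∈ C,
      lam * ⟪gradient g x, xp⟫ + Dh xp x ≤ lam * ⟪gradient g x, u⟫ + Dh u x) :
    lam * g xp ≤ lam * g x - (1 - lam * L) * Dh xp x := by
  have hgradinner : ∀ (f : EuclideanSpace ℝ (Fin n) → ℝ) (v : EuclideanSpace ℝ (Fin n)),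
      ⟪gradient f x, v⟫ = fderiv ℝ f x v := fun f v =>
    InnerProductSpace.toDual_symm_apply
  have hφdiff : Differentiable ℝ (fun u => L * h u - g u) :=
    (hh.const_mul L).sub hg
  have haux := grad_ineq_aux hφdiff hsmad hx hxp
  have hfd : fderiv ℝ (fun u => L * h u - g u) x (xp - x)
      = L * fderiv ℝ h x (xp - x) - fderiv ℝ g x (xp - x) := by
    rw [fderiv_fun_sub ((hh x).const_mul L) (hg x), fderiv_const_mul (hh x)]
    simp
  rw [hfd] at haux
  have hgh := hgradinner h (xp - x)
  have hgg := hgradinner g (xp - x)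
  have hDxp : Dh xp x = h xp - h x - ⟪gradient h x, xp - x⟫ := hDh xp x
  have hDxx : Dh x x = 0 := by simp [hDh]
  have hm := hmin x hx
  rw [hDxx] at hm
  have hsplit : ⟪gradient g x, xp - x⟫ = ⟪gradient g x, xp⟫ - ⟪gradient g x, x⟫ :=
    inner_sub_right _ _ _
  nlinarith [mul_le_mul_of_nonneg_left haux hlam.le, mul_pos hlam hL]
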